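/- Let L be a field with discrete valuation v and residue field κ. For any a ∈ L^× with v(a) = 0 and v(1−a) = 0 (and a ≠ 1), the tame symbol t(a, 1−a) = 1 in κ^×; more generally for any a ≠ 0, 1 in L^×, t(a, 1−a) = 1, so the tame symbol descends to a homomorphism K₂ᴹ(L) → κ^×. -/

import Mathlib

open TensorProduct

/-- The data of a discrete valuation `v` on a field `L` together with its
valuation ring `A`, residue field `κ` and reduction map `ρ`. -/
structure DiscValData (L κ : Type*) [Field L] [Field κ] where
  /-- the discrete valuation, written multiplicatively on units -/
  v : Lˣ →* Multiplicative ℤ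
  surj : Function.Surjective v
  /-- the valuation ring -/
  A : Subring L
  memA : ∀ x : Lˣ, (x : L) ∈ A ↔ 0 ≤ (v x).toAdd
  /-- reduction to the residue field -/
  ρ : A →+* κ
  ρsurj : Function.Surjective ρ
  ker_ρ : ∀ (x : Lˣ) (hx : (x : L) ∈ A), ρ ⟨x, hx⟩ = 0 ↔ 0 < (v x).toAdd

namespace DiscValData

variable {L κ : Type*} [Field L] [Field κ] (d : DiscValData L κ)

theorem val_unit_mem (f g : Lˣ) :
    ((f ^ (d.v g).toAdd * g ^ (-(d.v f).toAdd) : Lˣ) : L) ∈ d.A := by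
  rw [d.memA]
  have : (d.v (f ^ (d.v g).toAdd * g ^ (-(d.v f).toAdd))).toAdd = 0 := by
    simp only [map_mul, map_zpow, toAdd_mul, toAdd_zpow, smul_eq_mul]
    ring
  omega

/-- The tame symbol `t(f,g) = (-1)^{v(f)v(g)} · ρ(f^{v(g)}/g^{v(f)})`. -/
noncomputable def t (f g : Lˣ) : κ :=
  (-1 : κ) ^ ((d.v f).toAdd * (d.v g).toAdd) *
    d.ρ ⟨((f ^ (d.v g).toAdd * g ^ (-(d.v f).toAdd) : Lˣ) : L), d.val_unit_mem f g⟩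



lemma mem_ker_iff (x : Lˣ) : x ∈ d.v.ker ↔ (d.v x).toAdd = 0 := by
  rw [MonoidHom.mem_ker]
  constructor
  · intro h; rw [h]; rfl
  · intro h
    have : Multiplicative.toAdd (d.v x) = Multiplicative.toAdd (1 : Multiplicative ℤ) := h
    exact Multiplicative.toAdd.injective this

lemma memA_of_ker {x : Lˣ} (hx : x ∈ d.v.ker) : (x : L) ∈ d.A :=
  (d.memA x).2 (by rw [d.mem_ker_iff] at hx; omega)

lemma ρ_ker_ne_zero {x : Lˣ} (hx : x ∈ d.v.ker) :
    d.ρ ⟨(x : L), d.memA_of_ker hx⟩ ≠ 0 := by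
  rw [ne_eq, d.ker_ρ x (d.memA_of_ker hx)]
  rw [d.mem_ker_iff] at hx
  omega

lemma ρ_congr {x y : L} (hx : x ∈ d.A) (hy : y ∈ d.A) (h : x = y) :
    d.ρ ⟨x, hx⟩ = d.ρ ⟨y, hy⟩ := by subst h; rfl

noncomputable def ρ₀ : d.v.ker →* κˣ where
  toFun x := Units.mk0 (d.ρ ⟨((x : Lˣ) : L), d.memA_of_ker x.2⟩) (d.ρ_ker_ne_zero x.2)
  map_one' := by
    ext
    simp only [Units.val_mk0, Units.val_one]
    rw [d.ρ_congr _ (Subring.one_mem d.A) (by norm_num)]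
    exact map_one d.ρ
  map_mul' x y := by
    ext
    simp only [Units.val_mk0, Units.val_mul]
    rw [show (⟨(((x * y : d.v.ker) : Lˣ) : L), _⟩ : d.A)
        = ⟨((x : Lˣ) : L), d.memA_of_ker x.2⟩ * ⟨((y : Lˣ) : L), d.memA_of_ker y.2⟩ from
      Subtype.ext (by push_cast; ring)]
    exact map_mul d.ρ _ _

lemma vz_mem (f g : Lˣ) : (f ^ (d.v g).toAdd * g ^ (-(d.v f).toAdd)) ∈ d.v.ker := by
  rw [d.mem_ker_iff]
  simp only [map_mul, map_zpow, toAdd_mul, toAdd_zpow, smul_eq_mul]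
  ring

noncomputable def tU (f g : Lˣ) : κˣ :=
  (-1 : κˣ) ^ ((d.v f).toAdd * (d.v g).toAdd) *
    d.ρ₀ ⟨f ^ (d.v g).toAdd * g ^ (-(d.v f).toAdd), d.vz_mem f g⟩

lemma tU_coe (f g : Lˣ) : ((d.tU f g : κˣ) : κ) = d.t f g := by
  simp only [tU, t, ρ₀, MonoidHom.coe_mk, OneHom.coe_mk, Units.val_mul, Units.val_mk0]
  congr 1
  rw [Units.val_zpow_eq_zpow_val]; norm_num

-- a computation principle
lemma tU_eq (f g : Lˣ) (x : d.v.ker)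
    (hx : (x : Lˣ) = f ^ (d.v g).toAdd * g ^ (-(d.v f).toAdd)) :
    d.tU f g = (-1 : κˣ) ^ ((d.v f).toAdd * (d.v g).toAdd) * d.ρ₀ x := by
  rw [tU]
  congr 1
  congr 1
  exact Subtype.ext hx.symm

lemma tU_mul_left (f f' g : Lˣ) : d.tU (f * f') g = d.tU f g * d.tU f' g := by
  have key : ((⟨f ^ (d.v g).toAdd * g ^ (-(d.v f).toAdd), d.vz_mem f g⟩ *
      ⟨f' ^ (d.v g).toAdd * g ^ (-(d.v f').toAdd), d.vz_mem f' g⟩ : d.v.ker) : Lˣ)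
      = (f * f') ^ (d.v g).toAdd * g ^ (-(d.v (f * f')).toAdd) := by
    push_cast
    rw [map_mul, toAdd_mul, mul_zpow, neg_add, zpow_add]
    exact mul_mul_mul_comm _ _ _ _
  rw [d.tU_eq (f * f') g _ key, tU, tU, map_mul d.ρ₀, map_mul d.v, toAdd_mul, add_mul,
    zpow_add]
  exact mul_mul_mul_comm _ _ _ _

lemma tU_mul_right (f g g' : Lˣ) : d.tU f (g * g') = d.tU f g * d.tU f g' := by
  have key : ((⟨f ^ (d.v g).toAdd * g ^ (-(d.v f).toAdd), d.vz_mem f g⟩ *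
      ⟨f ^ (d.v g').toAdd * g' ^ (-(d.v f).toAdd), d.vz_mem f g'⟩ : d.v.ker) : Lˣ)
      = f ^ (d.v (g * g')).toAdd * (g * g') ^ (-(d.v f).toAdd) := by
    push_cast
    rw [map_mul, toAdd_mul, mul_zpow, zpow_add]
    exact mul_mul_mul_comm _ _ _ _
  rw [d.tU_eq f (g * g') _ key, tU, tU, map_mul d.ρ₀, map_mul d.v, toAdd_mul, mul_add,
    zpow_add]
  exact mul_mul_mul_comm _ _ _ _

lemma one_sub_mem {x : Lˣ} (hx : 0 < (d.v x).toAdd) : (1 : L) - x ∈ d.A :=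
  sub_mem (Subring.one_mem _) ((d.memA x).2 hx.le)

lemma ρ_one_sub {x : Lˣ} (hx : 0 < (d.v x).toAdd) :
    d.ρ ⟨(1 : L) - x, d.one_sub_mem hx⟩ = 1 := by
  rw [show (⟨(1:L) - x, d.one_sub_mem hx⟩ : d.A)
      = 1 - ⟨(x : L), (d.memA x).2 hx.le⟩ from Subtype.ext rfl,
    map_sub, map_one, (d.ker_ρ x _).2 hx, sub_zero]

lemma mk0_one_sub_mem_ker {x : Lˣ} (hx : 0 < (d.v x).toAdd) (h : (1 : L) - x ≠ 0) :
    Units.mk0 ((1 : L) - x) h ∈ d.v.ker := by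
  have hmem : ((Units.mk0 ((1:L) - x) h : Lˣ) : L) ∈ d.A := d.one_sub_mem hx
  rw [d.mem_ker_iff]
  have h1 : 0 ≤ (d.v (Units.mk0 ((1:L) - x) h)).toAdd := (d.memA _).1 hmem
  have h2 : ¬ 0 < (d.v (Units.mk0 ((1:L) - x) h)).toAdd := by
    rw [← d.ker_ρ _ hmem, d.ρ_congr hmem (d.one_sub_mem hx) rfl, d.ρ_one_sub hx]
    exact one_ne_zero
  omega

lemma ρ₀_one_sub {x : Lˣ} (hx : 0 < (d.v x).toAdd) (h : (1 : L) - x ≠ 0)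
    (hk : Units.mk0 ((1 : L) - x) h ∈ d.v.ker) :
    d.ρ₀ ⟨Units.mk0 ((1 : L) - x) h, hk⟩ = 1 := by
  ext
  simp only [ρ₀, MonoidHom.coe_mk, OneHom.coe_mk, Units.val_mk0, Units.val_one]
  rw [d.ρ_congr _ (d.one_sub_mem hx) rfl]
  exact d.ρ_one_sub hx

lemma neg_one_mem_ker : (-1 : Lˣ) ∈ d.v.ker := by
  rw [d.mem_ker_iff]
  have h : ((-1 : Lˣ)) * (-1) = 1 := by simp
  have h2 : (d.v (-1 : Lˣ)).toAdd + (d.v (-1 : Lˣ)).toAdd = 0 := by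
    rw [← toAdd_mul, ← map_mul, h, map_one, toAdd_one]
  omega

lemma ρ₀_neg_one (hk : (-1 : Lˣ) ∈ d.v.ker) : d.ρ₀ ⟨-1, hk⟩ = -1 := by
  ext
  show d.ρ ⟨(((-1 : Lˣ)) : L), _⟩ = _
  rw [show (⟨(((-1 : Lˣ)) : L), d.memA_of_ker hk⟩ : d.A) = -1 from Subtype.ext (by simp),
    map_neg, map_one, Units.val_neg, Units.val_one]

lemma neg_one_zpow_neg (k : ℤ) : ((-1 : Lˣ)) ^ (-k) = (-1 : Lˣ) ^ k := by
  rw [zpow_neg]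
  exact inv_eq_of_mul_eq_one_left (by rw [← mul_zpow, neg_mul_neg, one_mul, one_zpow])

lemma tU_steinberg (a : Lˣ) (h : (1 : L) - a ≠ 0) :
    d.tU a (Units.mk0 ((1 : L) - a) h) = 1 := by
  rcases lt_trichotomy ((d.v a).toAdd) 0 with hm | hm | hm
  · -- v(a) < 0
    have hb : 0 < (d.v a⁻¹).toAdd := by rw [map_inv, toAdd_inv]; omega
    have h2 : (1 : L) - (a⁻¹ : Lˣ) ≠ 0 := by
      intro hc
      have hc1 : ((a⁻¹ : Lˣ) : L) = 1 := by
        have := sub_eq_zero.mp hc; exact this.symm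
      have hc2 : (a⁻¹ : Lˣ) = 1 := Units.ext hc1
      rw [hc2] at hb; simp at hb
    have hwker := d.mk0_one_sub_mem_ker hb h2
    have hneg := d.neg_one_mem_ker
    have hgw : Units.mk0 ((1 : L) - a) h =
        -(a * Units.mk0 ((1 : L) - (a⁻¹ : Lˣ)) h2) := by
      ext
      rw [Units.val_neg, Units.val_mul, Units.val_mk0, Units.val_mk0, mul_sub, mul_one,
        Units.mul_inv]
      ring
    have hn : (d.v (Units.mk0 ((1 : L) - a) h)).toAdd = (d.v a).toAdd := by
      rw [hgw, show -(a * Units.mk0 ((1 : L) - (a⁻¹ : Lˣ)) h2)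
          = (-1) * (a * Units.mk0 ((1 : L) - (a⁻¹ : Lˣ)) h2) from (neg_one_mul _).symm]
      simp only [map_mul, toAdd_mul]
      have e1 : (d.v (-1 : Lˣ)).toAdd = 0 := (d.mem_ker_iff _).1 hneg
      have e2 : (d.v (Units.mk0 ((1 : L) - (a⁻¹ : Lˣ)) h2)).toAdd = 0 :=
        (d.mem_ker_iff _).1 hwker
      omega
    have hx : (((⟨-1, hneg⟩ : d.v.ker) ^ (d.v a).toAdd *
          (⟨Units.mk0 ((1 : L) - (a⁻¹ : Lˣ)) h2, hwker⟩ : d.v.ker) ^ (-(d.v a).toAdd) :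
          d.v.ker) : Lˣ)
        = a ^ (d.v (Units.mk0 ((1 : L) - a) h)).toAdd *
          (Units.mk0 ((1 : L) - a) h) ^ (-(d.v a).toAdd) := by
      simp only [Subgroup.coe_mul, Subgroup.coe_zpow]
      rw [hn, hgw, show -(a * Units.mk0 ((1 : L) - (a⁻¹ : Lˣ)) h2)
          = (-1) * (a * Units.mk0 ((1 : L) - (a⁻¹ : Lˣ)) h2) from (neg_one_mul _).symm,
        mul_zpow, mul_zpow, neg_one_zpow_neg, mul_left_comm, ← mul_assoc (a ^ (d.v a).toAdd),
        ← zpow_add, add_neg_cancel, zpow_zero, one_mul]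
    rw [d.tU_eq _ _ _ hx, hn, map_mul, map_zpow, map_zpow, d.ρ₀_neg_one, d.ρ₀_one_sub hb h2,
      one_zpow, mul_one, ← zpow_add, show (d.v a).toAdd * (d.v a).toAdd + (d.v a).toAdd
        = (d.v a).toAdd * ((d.v a).toAdd + 1) by ring]
    exact Even.neg_one_zpow (Int.even_mul_succ_self _)
  · -- v(a) = 0
    have haker : a ∈ d.v.ker := (d.mem_ker_iff _).2 hm
    have hamem : (a : L) ∈ d.A := d.memA_of_ker haker
    have hgmem : ((1 : L) - a) ∈ d.A := sub_mem (Subring.one_mem _) hamem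
    have hn0 : 0 ≤ (d.v (Units.mk0 ((1 : L) - a) h)).toAdd := (d.memA _).1 hgmem
    rcases eq_or_lt_of_le hn0 with hn | hn
    · -- v(1-a) = 0
      have hx : (((1 : d.v.ker) : Lˣ))
          = a ^ (d.v (Units.mk0 ((1 : L) - a) h)).toAdd *
            (Units.mk0 ((1 : L) - a) h) ^ (-(d.v a).toAdd) := by
        rw [← hn, hm]
        simp
      rw [d.tU_eq _ _ _ hx, ← hn, hm]
      simp
    · -- v(1-a) > 0, so ρ(a) = 1
      have hρg : d.ρ ⟨((1 : L) - a), hgmem⟩ = 0 := (d.ker_ρ _ hgmem).2 hn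
      have hρa : d.ρ₀ ⟨a, haker⟩ = 1 := by
        ext
        simp only [ρ₀, MonoidHom.coe_mk, OneHom.coe_mk, Units.val_mk0, Units.val_one]
        have : (⟨((a : Lˣ) : L), d.memA_of_ker haker⟩ : d.A)
            = 1 - ⟨(1 : L) - a, hgmem⟩ := Subtype.ext (by push_cast; ring)
        rw [this, map_sub, map_one, hρg, sub_zero]
      have hx : (((⟨a, haker⟩ : d.v.ker) ^ (d.v (Units.mk0 ((1 : L) - a) h)).toAdd : d.v.ker) : Lˣ)
          = a ^ (d.v (Units.mk0 ((1 : L) - a) h)).toAdd *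
            (Units.mk0 ((1 : L) - a) h) ^ (-(d.v a).toAdd) := by
        push_cast
        rw [hm]
        simp
      rw [d.tU_eq _ _ _ hx, hm, map_zpow, hρa]
      simp
  · -- v(a) > 0
    have hgker := d.mk0_one_sub_mem_ker hm h
    have hn : (d.v (Units.mk0 ((1 : L) - a) h)).toAdd = 0 := (d.mem_ker_iff _).1 hgker
    have hx : (((⟨Units.mk0 ((1 : L) - a) h, hgker⟩ : d.v.ker) ^ (-(d.v a).toAdd) :
          d.v.ker) : Lˣ)
        = a ^ (d.v (Units.mk0 ((1 : L) - a) h)).toAdd *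
          (Units.mk0 ((1 : L) - a) h) ^ (-(d.v a).toAdd) := by
      push_cast
      rw [hn]
      simp
    rw [d.tU_eq _ _ _ hx, hn, map_zpow, d.ρ₀_one_sub hm h]
    simp

noncomputable def tHom2 : Additive Lˣ →+ Additive Lˣ →+ Additive κˣ :=
  AddMonoidHom.mk' (fun f => AddMonoidHom.mk'
      (fun g => Additive.ofMul (d.tU f.toMul g.toMul))
      (fun g g' => by
        rw [toMul_add, d.tU_mul_right, ofMul_mul]))
    (fun f f' => by
      refine AddMonoidHom.ext fun g => ?_
      show Additive.ofMul (d.tU (f + f').toMul g.toMul)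
        = Additive.ofMul (d.tU f.toMul g.toMul) + Additive.ofMul (d.tU f'.toMul g.toMul)
      rw [toMul_add, d.tU_mul_left, ofMul_mul])

noncomputable def tLift : TensorProduct ℤ (Additive Lˣ) (Additive Lˣ) →+ Additive κˣ :=
  TensorProduct.liftAddHom d.tHom2 (fun r m n => by
    have h1 : d.tHom2 (r • m) n = d.tHom2.flip n (r • m) := rfl
    have h2 : d.tHom2.flip n m = d.tHom2 m n := rfl
    rw [h1, map_zsmul, h2, ← map_zsmul (d.tHom2 m) r n])


end DiscValData

/-- The set of Steinberg elements `a ⊗ (1 - a)` for `a ≠ 0, 1`. -/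
def SteinbergSet (L : Type*) [Field L] :
    Set (TensorProduct ℤ (Additive Lˣ) (Additive Lˣ)) :=
  {x | ∃ (a : Lˣ) (h : (1 : L) - a ≠ 0),
    x = Additive.ofMul a ⊗ₜ[ℤ] Additive.ofMul (Units.mk0 ((1 : L) - a) h)}

/-- The Milnor K-group `K₂ᴹ(L)`. -/
def K2M (L : Type*) [Field L] :=
  (TensorProduct ℤ (Additive Lˣ) (Additive Lˣ)) ⧸
    AddSubgroup.closure (SteinbergSet L)

noncomputable instance (L : Type*) [Field L] : AddCommGroup (K2M L) :=
  QuotientAddGroup.Quotient.addCommGroup _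

/-- The Milnor symbol `{f, g}` in `K₂ᴹ(L)`. -/
noncomputable def K2symbol {L : Type*} [Field L] (f g : Lˣ) : K2M L :=
  QuotientAddGroup.mk (Additive.ofMul f ⊗ₜ[ℤ] Additive.ofMul g)

namespace DiscValData

variable {L κ : Type*} [Field L] [Field κ] (d : DiscValData L κ)

lemma tLift_steinberg : ∀ x ∈ AddSubgroup.closure (SteinbergSet L), d.tLift x = 0 := by
  have hsub : SteinbergSet L ⊆ (d.tLift.ker : Set _) := by
    rintro x ⟨a, ha, rfl⟩
    have key : d.tLift (Additive.ofMul a ⊗ₜ[ℤ]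
        Additive.ofMul (Units.mk0 ((1 : L) - a) ha))
        = Additive.ofMul (d.tU a (Units.mk0 ((1 : L) - a) ha)) := rfl
    rw [SetLike.mem_coe, AddMonoidHom.mem_ker, key, d.tU_steinberg a ha]
    rfl
  intro x hx
  exact AddMonoidHom.mem_ker.1 ((AddSubgroup.closure_le _).2 hsub hx)

end DiscValData

/-- For any `a ∈ L^×` with `a ≠ 0, 1`, the tame symbol satisfies
`t(a, 1-a) = 1` in the residue field, so the tame symbol descends to a
homomorphism `K₂ᴹ(L) → κ^×`. -/
theorem stmt3 (L κ : Type*) [Field L] [Field κ] (d : DiscValData L κ) :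
    (∀ (a : Lˣ) (h : (1 : L) - a ≠ 0), d.t a (Units.mk0 ((1 : L) - a) h) = 1) ∧
    ∃ T : K2M L →+ Additive κˣ,
      ∀ f g : Lˣ, ((Additive.toMul (T (K2symbol f g)) : κˣ) : κ) = d.t f g := by
  constructor
  · intro a h
    rw [← d.tU_coe, d.tU_steinberg a h, Units.val_one]
  · refine ⟨QuotientAddGroup.lift _ d.tLift d.tLift_steinberg, fun f g => ?_⟩
    rw [← d.tU_coe]
    congr 1
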